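/- If X given λ is Poisson(λ) and λ has the transmuted exponential density f(λ) = (1-α)θe^{-θλ} + 2αθe^{-2θλ} on λ ≥ 0, with |α| ≤ 1 and θ > 0, then the marginal pmf of X is P(X = x) = θ((1-α)/(1+θ)^{x+1} + 2α/(1+2θ)^{x+1}) for x = 0, 1, 2, …. -/

import Mathlib

open MeasureTheory Real

lemma key_integrable (x : ℕ) {r : ℝ} (hr : 0 < r) :
    IntegrableOn (fun l : ℝ => l ^ x * Real.exp (-(r * l))) (Set.Ioi 0) := by
  have h := integrableOn_rpow_mul_exp_neg_mul_rpow
    (by exact neg_one_lt_zero.trans_le (Nat.cast_nonneg x)) (zero_lt_one : (0:ℝ) < 1) hr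
  refine h.congr_fun (fun l hl => ?_) measurableSet_Ioi
  have hl' : (0:ℝ) < l := hl
  beta_reduce
  rw [Real.rpow_one, Real.rpow_natCast, neg_mul]

lemma key_integral (x : ℕ) {r : ℝ} (hr : 0 < r) :
    ∫ l in Set.Ioi (0:ℝ), l ^ x * Real.exp (-(r * l))
      = (Nat.factorial x : ℝ) / r ^ (x + 1) := by
  have h := integral_rpow_mul_exp_neg_mul_Ioi
    (by positivity : (0:ℝ) < (x : ℝ) + 1) hr
  rw [show ((x:ℝ) + 1 - 1) = (x:ℝ) by ring] at h
  rw [show (∫ l in Set.Ioi (0:ℝ), l ^ x * Real.exp (-(r * l)))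
      = ∫ l in Set.Ioi (0:ℝ), l ^ ((x:ℝ)) * Real.exp (-(r * l)) from
    setIntegral_congr_fun measurableSet_Ioi (fun l hl => by
      rw [Real.rpow_natCast]), h]
  rw [show ((x:ℝ) + 1) = ((x + 1 : ℕ) : ℝ) by push_cast; ring,
    Real.rpow_natCast, show ((x + 1 : ℕ) : ℝ) = (x : ℝ) + 1 by push_cast; ring,
    Real.Gamma_nat_eq_factorial]
  rw [div_pow, one_pow, div_mul_eq_mul_div, one_mul]

theorem pte_pmf_from_mixture (α θ : ℝ) (hα : |α| ≤ 1) (hθ : 0 < θ) (x : ℕ) :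
    ∫ l in Set.Ioi (0 : ℝ),
      (Real.exp (-l) * l ^ x / (Nat.factorial x : ℝ)) *
        ((1 - α) * θ * Real.exp (-θ * l) + 2 * α * θ * Real.exp (-2 * θ * l))
    = θ * ((1 - α) / (1 + θ) ^ (x + 1) + 2 * α / (1 + 2 * θ) ^ (x + 1)) := by
  have h1 : (0:ℝ) < 1 + θ := by linarith
  have h2 : (0:ℝ) < 1 + 2 * θ := by linarith
  have hfac : (0:ℝ) < (Nat.factorial x : ℝ) := by positivity
  set c1 : ℝ := (1 - α) * θ / (Nat.factorial x : ℝ)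
  set c2 : ℝ := 2 * α * θ / (Nat.factorial x : ℝ)
  have hcongr : ∀ l ∈ Set.Ioi (0:ℝ),
      (Real.exp (-l) * l ^ x / (Nat.factorial x : ℝ)) *
        ((1 - α) * θ * Real.exp (-θ * l) + 2 * α * θ * Real.exp (-2 * θ * l))
      = c1 * (l ^ x * Real.exp (-((1 + θ) * l)))
        + c2 * (l ^ x * Real.exp (-((1 + 2 * θ) * l))) := by
    intro l _
    have e1 : Real.exp (-l) * Real.exp (-θ * l) = Real.exp (-((1 + θ) * l)) := by
      rw [← Real.exp_add]; ring_nf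
    have e2 : Real.exp (-l) * Real.exp (-2 * θ * l) = Real.exp (-((1 + 2 * θ) * l)) := by
      rw [← Real.exp_add]; ring_nf
    simp only [c1, c2]
    rw [← e1, ← e2]
    field_simp
  rw [setIntegral_congr_fun measurableSet_Ioi hcongr]
  rw [integral_add ((key_integrable x h1).const_mul c1)
      ((key_integrable x h2).const_mul c2),
    integral_const_mul, integral_const_mul, key_integral x h1, key_integral x h2]
  simp only [c1, c2]
  field_simp
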